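/- There are no positive integers b, c with c = b + 4 and (p-1)!·b! = c!, whenever p is a prime congruent to 2 or 3 modulo 5. -/

import Mathlib

theorem stmt8_aux2 : ¬ IsSquare ((2 : ℕ) : ZMod 5) := by decide

theorem stmt8_aux3 : ¬ IsSquare ((3 : ℕ) : ZMod 5) := by decide

theorem stmt8 (p : ℕ) (hp : p.Prime) (h5 : p % 5 = 2 ∨ p % 5 = 3) :
    ¬ ∃ b c : ℕ, 0 < b ∧ 0 < c ∧ c = b + 4 ∧
      (p - 1).factorial * b.factorial = c.factorial := by
  rintro ⟨b, c, hb, hc, rfl, h⟩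
  -- reduce to (p-1)! = (b+1)(b+2)(b+3)(b+4)
  have key : (p - 1).factorial = (b + 1) * (b + 2) * (b + 3) * (b + 4) := by
    have hfac : (b + 4).factorial = ((b + 1) * (b + 2) * (b + 3) * (b + 4)) * b.factorial := by
      show (b + 1 + 1 + 1 + 1).factorial = _
      simp [Nat.factorial_succ]
      ring
    rw [hfac] at h
    exact Nat.eq_of_mul_eq_mul_right b.factorial_pos h
  have hp2 : p ≠ 2 := by
    intro h2
    subst h2
    norm_num [Nat.factorial] at key
    have h2 : 1 * 1 * 1 * 2 ≤ (b + 1) * (b + 2) * (b + 3) * (b + 4) := by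
      gcongr <;> omega
    omega
  haveI : Fact p.Prime := ⟨hp⟩
  haveI : Fact (Nat.Prime 5) := ⟨by norm_num⟩
  -- cast to ZMod p
  have hw : ((b : ZMod p) + 1) * ((b : ZMod p) + 2) * ((b : ZMod p) + 3) * ((b : ZMod p) + 4)
      = -1 := by
    have := congrArg (Nat.cast : ℕ → ZMod p) key
    rw [ZMod.wilsons_lemma] at this
    push_cast at this
    linear_combination -this
  have hz : ((b : ZMod p) ^ 2 + 5 * b + 5) = 0 := by
    have hsq : ((b : ZMod p) ^ 2 + 5 * b + 5) ^ 2 = 0 := by linear_combination hw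
    exact pow_eq_zero_iff (by norm_num) |>.mp hsq
  have h5sq : IsSquare (5 : ZMod p) := by
    refine ⟨2 * b + 5, ?_⟩
    linear_combination -(4 : ZMod p) * hz
  have hiff := ZMod.exists_sq_eq_prime_iff_of_mod_four_eq_one (p := 5) (q := p)
    (by norm_num) hp2
  rw [show ((5 : ℕ) : ZMod p) = (5 : ZMod p) by push_cast; ring] at hiff
  have hps : IsSquare ((p : ZMod 5)) := hiff.mpr h5sq
  rw [← ZMod.natCast_mod p 5] at hps
  rcases h5 with h5 | h5 <;> rw [h5] at hps
  · exact absurd hps stmt8_aux2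
  · exact absurd hps stmt8_aux3
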